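/- Let S and O be nonempty finite sets with |S| ≥ 2, let C be a channel from S to O, and let π be any prior on S with G(π) > 0. Then β(π, C) ≥ min over distinct pairs a, b ∈ S of β(π_{ab}, C). In other words, the multiplicative Bayes risk leakage over all priors is minimized by a prior of the form π* = (0, …, 0, 1/2, 0, …, 0, 1/2, 0, …, 0) that assigns probability 1/2 to each of two distinct secrets and 0 elsewhere, so β*(C) = min_{π : G(π) > 0} β(π, C). -/

import Mathlib

/-- A channel from secrets `S` to outputs `O`: nonnegative entries, rows sum to 1. -/
def IsChannel {S O : Type*} [Fintype O] (C : S → O → ℝ) : Prop :=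
  (∀ s o, 0 ≤ C s o) ∧ ∀ s, ∑ o, C s o = 1

/-- A prior on `S`: nonnegative, sums to 1. -/
def IsPrior {S : Type*} [Fintype S] (π : S → ℝ) : Prop :=
  (∀ s, 0 ≤ π s) ∧ ∑ s, π s = 1

/-- Bayes risk `R*(π, C) = 1 − ∑_o max_s (π s · C s o)`. -/
noncomputable def bayesRisk {S O : Type*} [Fintype S] [Nonempty S] [Fintype O]
    (π : S → ℝ) (C : S → O → ℝ) : ℝ :=
  1 - ∑ o, Finset.univ.sup' Finset.univ_nonempty (fun s => π s * C s o)

/-- Guessing error `G(π) = 1 − max_s π s`. -/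
noncomputable def guessErr {S : Type*} [Fintype S] [Nonempty S] (π : S → ℝ) : ℝ :=
  1 - Finset.univ.sup' Finset.univ_nonempty π

/-- Multiplicative Bayes risk leakage `β(π, C) = R*(π, C) / G(π)`. -/
noncomputable def betaL {S O : Type*} [Fintype S] [Nonempty S] [Fintype O]
    (π : S → ℝ) (C : S → O → ℝ) : ℝ :=
  bayesRisk π C / guessErr π

/-- The prior `π_{ab}` assigning 1/2 to each of `a` and `b` and 0 elsewhere. -/
noncomputable def pairPrior {S : Type*} [DecidableEq S] (a b : S) : S → ℝ :=
  fun s => if s = a ∨ s = b then 1 / 2 else 0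

/-- Bayes security `β*(C)`: the minimum of `β(π_{ab}, C)` over distinct pairs `a ≠ b`. -/
noncomputable def betaStar {S O : Type*} [Fintype S] [Nonempty S] [DecidableEq S] [Fintype O]
    (C : S → O → ℝ) (h : 1 < Fintype.card S) : ℝ :=
  (Finset.univ.filter (fun p : S × S => p.1 ≠ p.2)).inf'
    (by
      obtain ⟨a, b, hab⟩ := Fintype.exists_pair_of_one_lt_card h
      exact ⟨(a, b), by simp [hab]⟩)
    (fun p => betaL (pairPrior p.1 p.2) C)

section Aux
variable {S O : Type*} [Fintype S] [Nonempty S] [DecidableEq S] [Fintype O] [Nonempty O]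

lemma betaL_pair (C : S → O → ℝ) (hC : IsChannel C) (a b : S) (hab : a ≠ b) :
    betaL (pairPrior a b) C = ∑ o, min (C a o) (C b o) := by
  have hsup : Finset.univ.sup' Finset.univ_nonempty (pairPrior a b) = 1 / 2 := by
    apply le_antisymm
    · apply Finset.sup'_le
      intro s _
      unfold pairPrior
      split <;> norm_num
    · exact (show (1:ℝ) / 2 = pairPrior a b a by simp [pairPrior]).trans_le
        (Finset.le_sup' (pairPrior a b) (Finset.mem_univ a))
  have hsupo : ∀ o, Finset.univ.sup' Finset.univ_nonempty (fun s => pairPrior a b s * C s o)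
      = max (C a o) (C b o) / 2 := by
    intro o
    apply le_antisymm
    · apply Finset.sup'_le
      intro s _
      by_cases h : s = a ∨ s = b
      · rcases h with h | h
        · rw [h, show pairPrior a b a = 1/2 by simp [pairPrior]]
          linarith [le_max_left (C a o) (C b o)]
        · rw [h, show pairPrior a b b = 1/2 by simp [pairPrior]]
          linarith [le_max_right (C a o) (C b o)]
      · simp only [pairPrior, if_neg h, zero_mul]
        have h1 : (0:ℝ) ≤ max (C a o) (C b o) := (hC.1 a o).trans (le_max_left _ _)
        linarith
    · rcases le_total (C a o) (C b o) with h | h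
      · rw [max_eq_right h]
        calc C b o / 2 = pairPrior a b b * C b o := by simp [pairPrior]; ring
          _ ≤ _ := Finset.le_sup' (fun s => pairPrior a b s * C s o) (Finset.mem_univ b)
      · rw [max_eq_left h]
        calc C a o / 2 = pairPrior a b a * C a o := by simp [pairPrior]; ring
          _ ≤ _ := Finset.le_sup' (fun s => pairPrior a b s * C s o) (Finset.mem_univ a)
  have hmaxmin : ∑ o, max (C a o) (C b o) = 2 - ∑ o, min (C a o) (C b o) := by
    have h1 : ∀ o, max (C a o) (C b o) = C a o + C b o - min (C a o) (C b o) := by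
      intro o
      have := max_add_min (C a o) (C b o)
      linarith
    rw [Finset.sum_congr rfl fun o _ => h1 o, Finset.sum_sub_distrib,
      Finset.sum_add_distrib, hC.2 a, hC.2 b]
    ring
  rw [betaL, bayesRisk, guessErr, hsup, Finset.sum_congr rfl fun o _ => hsupo o,
    ← Finset.sum_div, hmaxmin]
  ring

end Aux

/-- `β(π, C)` is minimized over all priors with positive guessing error by a
prior of the form `π_{ab}` (uniform on two distinct secrets), i.e. `β*(C) ≤ β(π, C)`. -/
theorem betaStar_le_betaL {S O : Type*} [Fintype S] [Nonempty S] [DecidableEq S]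
    [Fintype O] [Nonempty O] (hS : 1 < Fintype.card S)
    (C : S → O → ℝ) (hC : IsChannel C)
    (π : S → ℝ) (hπ : IsPrior π) (hG : 0 < guessErr π) :
    betaStar C hS ≤ betaL π C := by

  obtain ⟨m, -, hm⟩ := Finset.exists_mem_eq_sup' Finset.univ_nonempty π
  have hπm : ∀ s, π s ≤ π m := fun s => by
    rw [← hm]; exact Finset.le_sup' π (Finset.mem_univ s)
  set B := betaStar C hS with hB
  have hBle : ∀ s, s ≠ m → B ≤ ∑ o, min (C s o) (C m o) := by
    intro s hs
    have hmem : (s, m) ∈ Finset.univ.filter (fun p : S × S => p.1 ≠ p.2) := by simp [hs]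
    calc B ≤ betaL (pairPrior s m) C := Finset.inf'_le _ hmem
      _ = ∑ o, min (C s o) (C m o) := betaL_pair C hC s m hs
  have hs_bound : ∀ s ∈ Finset.univ.erase m,
      ∑ o, (max (π s * C s o) (π m * C m o) - π m * C m o) ≤ π s * (1 - B) := by
    intro s hsm
    have hs : s ≠ m := Finset.ne_of_mem_erase hsm
    have h1 : ∀ o, max (π s * C s o) (π m * C m o) - π m * C m o
        ≤ π s * C s o - π s * min (C s o) (C m o) := by
      intro o
      have hmin : π s * min (C s o) (C m o) ≤ min (π s * C s o) (π m * C m o) := by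
        apply le_min
        · exact mul_le_mul_of_nonneg_left (min_le_left _ _) (hπ.1 s)
        · exact mul_le_mul (hπm s) (min_le_right _ _)
            (le_min (hC.1 s o) (hC.1 m o)) ((hπ.1 s).trans (hπm s))
      have := max_add_min (π s * C s o) (π m * C m o)
      linarith
    calc ∑ o, (max (π s * C s o) (π m * C m o) - π m * C m o)
        ≤ ∑ o, (π s * C s o - π s * min (C s o) (C m o)) :=
          Finset.sum_le_sum fun o _ => h1 o
      _ = π s * 1 - π s * ∑ o, min (C s o) (C m o) := by
          rw [Finset.sum_sub_distrib, ← Finset.mul_sum, ← Finset.mul_sum, hC.2 s]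
      _ ≤ π s * 1 - π s * B := by nlinarith [hπ.1 s, hBle s hs]
      _ = π s * (1 - B) := by ring
  have hsup_o : ∀ o : O, Finset.univ.sup' Finset.univ_nonempty (fun s => π s * C s o)
      ≤ π m * C m o +
        ∑ s ∈ Finset.univ.erase m, (max (π s * C s o) (π m * C m o) - π m * C m o) := by
    intro o
    apply Finset.sup'_le
    intro t _
    have hnn : ∀ s ∈ Finset.univ.erase m,
        0 ≤ max (π s * C s o) (π m * C m o) - π m * C m o := by
      intro s _; exact sub_nonneg.mpr (le_max_right _ _)
    by_cases ht : t = m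
    · subst ht
      have := Finset.sum_nonneg hnn
      linarith
    · have hmem : t ∈ Finset.univ.erase m := Finset.mem_erase.mpr ⟨ht, Finset.mem_univ t⟩
      have h2 := Finset.single_le_sum hnn hmem
      have h3 : π t * C t o ≤ max (π t * C t o) (π m * C m o) := le_max_left _ _
      linarith
  have hsum : ∑ o, Finset.univ.sup' Finset.univ_nonempty (fun s => π s * C s o)
      ≤ π m + (1 - π m) * (1 - B) := by
    calc ∑ o, Finset.univ.sup' Finset.univ_nonempty (fun s => π s * C s o)
        ≤ ∑ o, (π m * C m o +
            ∑ s ∈ Finset.univ.erase m, (max (π s * C s o) (π m * C m o) - π m * C m o)) :=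
          Finset.sum_le_sum fun o _ => hsup_o o
      _ = π m * ∑ o, C m o +
            ∑ s ∈ Finset.univ.erase m, ∑ o, (max (π s * C s o) (π m * C m o) - π m * C m o) := by
          rw [Finset.sum_add_distrib, ← Finset.mul_sum, Finset.sum_comm]
      _ ≤ π m * 1 + ∑ s ∈ Finset.univ.erase m, π s * (1 - B) := by
          rw [hC.2 m]
          exact add_le_add (le_refl _) (Finset.sum_le_sum hs_bound)
      _ = π m + (∑ s ∈ Finset.univ.erase m, π s) * (1 - B) := by
          rw [← Finset.sum_mul]; ring
      _ = π m + (1 - π m) * (1 - B) := by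
          rw [Finset.sum_erase_eq_sub (Finset.mem_univ m), hπ.2]
  have hG' : guessErr π = 1 - π m := by rw [guessErr, hm]
  have hR : B * guessErr π ≤ bayesRisk π C := by
    rw [hG', bayesRisk]; nlinarith [hsum]
  rw [betaL, le_div_iff₀ hG]
  exact hR
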